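/- arXiv:2101.04845 — 2 statements merged into one kernel-verified Lean document; each statement's English description precedes it below -/
import Mathlib

section
/- Let $k \geq 1$, and for each $T \subseteq [k]$ and $s \in [k]$ let $u_{T,s}$ be elements of a field $F$, with $u_{T,s} = 0$ whenever $s \notin T$, and $u_{T,s} \neq 0$ for $s \in T$. Define $p_{S,T} = \prod_{t\in T} u_{S,t}$ for $T \subseteq S$ and $U_{S,T} = \frac{1}{p_{T,T}} \sum_{\mathcal{C}} (-1)^r \prod_{i=1}^r \frac{1}{p_{C_i, C_i \setminus C_{i-1}}}$, summing over all chains $T = C_0 \subsetneq \cdots \subsetneq C_r = S$. Then for every $T \subsetneq [k]$, $\sum_{S : T \subseteq S \subseteq [k]} p_{[k],S}\, U_{S,T} = 0$, and for $T = [k]$ the sum equals $1$. -/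
open Classical

/-- `p_{S,T} = ∏_{t ∈ T} u_{S,t}`. -/
noncomputable def pprod {F : Type*} [Field F] {k : ℕ}
    (u : Finset (Fin k) → Fin k → F) (S T : Finset (Fin k)) : F :=
  ∏ t ∈ T, u S t

/-- `U_{S,T} = p_{T,T}⁻¹ ∑_chains (-1)^r ∏_{i=1}^r p_{C_i, C_i \ C_{i-1}}⁻¹`, the sum
ranging over all chains `T = C₀ ⊊ C₁ ⊊ ⋯ ⊊ C_r = S` (all of which have `r ≤ k`). -/
noncomputable def Uchain {F : Type*} [Field F] {k : ℕ}
    (u : Finset (Fin k) → Fin k → F) (S T : Finset (Fin k)) : F :=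
  (pprod u T T)⁻¹ *
    ∑ r ∈ Finset.range (k + 1),
      ∑ C : Fin (r + 1) → Finset (Fin k),
        if StrictMono C ∧ C 0 = T ∧ C (Fin.last r) = S then
          (-1 : F) ^ r *
            ∏ i : Fin r, (pprod u (C i.succ) (C i.succ \ C i.castSucc))⁻¹
        else 0

section aux
variable {F : Type*} [Field F] {k : ℕ}

noncomputable def fterm (u : Finset (Fin k) → Fin k → F) (T : Finset (Fin k)) :
    (Σ r : ℕ, Fin (r + 1) → Finset (Fin k)) → F :=
  fun σ =>
    if StrictMono σ.2 ∧ σ.2 0 = T then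
      pprod u Finset.univ (σ.2 (Fin.last σ.1)) *
        ((-1 : F) ^ σ.1 *
          ∏ i : Fin σ.1, (pprod u (σ.2 i.succ) (σ.2 i.succ \ σ.2 i.castSucc))⁻¹)
    else 0

lemma strictMono_snoc {r : ℕ} {C : Fin (r + 1) → Finset (Fin k)} (hC : StrictMono C)
    (hlast : C (Fin.last r) ≠ Finset.univ) : StrictMono (Fin.snoc C Finset.univ) := by
  rw [Fin.strictMono_iff_lt_succ]
  intro i
  induction i using Fin.lastCases with
  | last =>
      rw [Fin.succ_last, Fin.snoc_last, Fin.snoc_castSucc]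
      exact Finset.lt_iff_ssubset.mpr (Finset.ssubset_univ_iff.mpr hlast)
  | cast j =>
      rw [Fin.succ_castSucc, Fin.snoc_castSucc, Fin.snoc_castSucc]
      exact hC (Fin.castSucc_lt_succ (i := j))

lemma pprod_ne_zero {u : Finset (Fin k) → Fin k → F}
    (hne : ∀ T s, s ∈ T → u T s ≠ 0) {S T : Finset (Fin k)} (hTS : T ⊆ S) :
    pprod u S T ≠ 0 :=
  Finset.prod_ne_zero_iff.mpr fun t ht => hne S t (hTS ht)

lemma pprod_cancel {u : Finset (Fin k) → Fin k → F}
    (hne : ∀ T s, s ∈ T → u T s ≠ 0) (S : Finset (Fin k)) :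
    pprod u Finset.univ Finset.univ * (pprod u Finset.univ (Finset.univ \ S))⁻¹ =
      pprod u Finset.univ S := by
  have h : pprod u Finset.univ (Finset.univ \ S) * pprod u Finset.univ S =
      pprod u Finset.univ Finset.univ := Finset.prod_sdiff (Finset.subset_univ S)
  have hnz : pprod u Finset.univ (Finset.univ \ S) ≠ 0 :=
    pprod_ne_zero hne (Finset.subset_univ _)
  rw [← h, mul_comm (pprod u Finset.univ (Finset.univ \ S)) (pprod u Finset.univ S),
    mul_inv_cancel_right₀ hnz]

lemma pair_cancel {u : Finset (Fin k) → Fin k → F}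
    (hne : ∀ T s, s ∈ T → u T s ≠ 0) (T : Finset (Fin k)) (m : ℕ)
    (D : Fin (m + 1) → Finset (Fin k)) (hD : StrictMono D) (h0 : D 0 = T)
    (hlast : D (Fin.last m) ≠ Finset.univ) :
    fterm u T ⟨m, D⟩ + fterm u T ⟨m + 1, Fin.snoc D Finset.univ⟩ = 0 := by
  have hE : StrictMono (Fin.snoc D (Finset.univ : Finset (Fin k))) := strictMono_snoc hD hlast
  have hE0 : (Fin.snoc D Finset.univ : Fin (m + 2) → Finset (Fin k)) 0 = T := by
    rw [show (0 : Fin (m + 2)) = Fin.castSucc 0 by simp, Fin.snoc_castSucc]; exact h0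
  have hprod : ∏ i : Fin (m + 1),
      (pprod u ((Fin.snoc D Finset.univ : Fin (m+2) → Finset (Fin k)) i.succ)
        ((Fin.snoc D Finset.univ : Fin (m+2) → Finset (Fin k)) i.succ \
          (Fin.snoc D Finset.univ : Fin (m+2) → Finset (Fin k)) i.castSucc))⁻¹ =
      (∏ i : Fin m, (pprod u (D i.succ) (D i.succ \ D i.castSucc))⁻¹) *
        (pprod u Finset.univ (Finset.univ \ D (Fin.last m)))⁻¹ := by
    rw [Fin.prod_univ_castSucc]
    congr 1
    · refine Finset.prod_congr rfl fun i _ => ?_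
      rw [Fin.succ_castSucc, Fin.snoc_castSucc, Fin.snoc_castSucc]
    · rw [Fin.succ_last, Fin.snoc_last, Fin.snoc_castSucc]
  simp only [fterm]
  rw [if_pos ⟨hD, h0⟩, if_pos ⟨hE, hE0⟩, hprod, Fin.snoc_last]
  have hc := pprod_cancel hne (S := D (Fin.last m))
  · rw [pow_succ]
    linear_combination (-((-1 : F) ^ m * ∏ i : Fin m,
      (pprod u (D i.succ) (D i.succ \ D i.castSucc))⁻¹)) * hc

noncomputable def gmap (T : Finset (Fin k)) :
    (Σ r : ℕ, Fin (r + 1) → Finset (Fin k)) → Σ r : ℕ, Fin (r + 1) → Finset (Fin k)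
  | ⟨r, C⟩ =>
    if StrictMono C ∧ C 0 = T then
      if C (Fin.last r) = Finset.univ then
        match r, C with
        | 0, C => ⟨0, C⟩
        | m + 1, C => ⟨m, Fin.init C⟩
      else ⟨r + 1, Fin.snoc C Finset.univ⟩
    else ⟨r, C⟩

lemma card_bound {r : ℕ} {C : Fin (r + 1) → Finset (Fin k)} (hC : StrictMono C) :
    r ≤ (C (Fin.last r)).card := by
  have h : ∀ i : Fin (r + 1), (i : ℕ) ≤ (C i).card := by
    intro i
    induction i using Fin.induction with
    | zero => simp
    | succ i ih =>
        have hlt : (C i.castSucc).card < (C i.succ).card :=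
          Finset.card_lt_card (hC (Fin.castSucc_lt_succ (i := i)))
        have : (i.succ : ℕ) = (i.castSucc : ℕ) + 1 := by simp
        omega
  simpa using h (Fin.last r)

lemma snoc_zero' {m : ℕ} (C : Fin (m + 1) → Finset (Fin k)) (A : Finset (Fin k)) :
    (Fin.snoc C A : Fin (m + 2) → Finset (Fin k)) 0 = C 0 := by
  rw [show (0 : Fin (m + 2)) = Fin.castSucc 0 by simp, Fin.snoc_castSucc]

section gm
variable {T : Finset (Fin k)}

lemma gmap_neg {r : ℕ} {C : Fin (r + 1) → Finset (Fin k)}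
    (h : ¬(StrictMono C ∧ C 0 = T)) : gmap T ⟨r, C⟩ = ⟨r, C⟩ := by
  simp only [gmap, if_neg h]

lemma gmap_pos_ne {r : ℕ} {C : Fin (r + 1) → Finset (Fin k)}
    (hc : StrictMono C ∧ C 0 = T) (hu : C (Fin.last r) ≠ Finset.univ) :
    gmap T ⟨r, C⟩ = ⟨r + 1, Fin.snoc C Finset.univ⟩ := by
  simp only [gmap, if_pos hc, if_neg hu]

lemma gmap_pos_eq {m : ℕ} {C : Fin (m + 2) → Finset (Fin k)}
    (hc : StrictMono C ∧ C 0 = T) (hu : C (Fin.last (m + 1)) = Finset.univ) :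
    gmap T ⟨m + 1, C⟩ = ⟨m, Fin.init C⟩ := by
  simp only [gmap, if_pos hc, if_pos hu]

lemma gmap_pos_eq0 {C : Fin 1 → Finset (Fin k)}
    (hc : StrictMono C ∧ C 0 = T) (hu : C (Fin.last 0) = Finset.univ) :
    gmap T ⟨0, C⟩ = ⟨0, C⟩ := by
  simp only [gmap, if_pos hc, if_pos hu]

end gm

lemma init_strictMono {m : ℕ} {C : Fin (m + 2) → Finset (Fin k)} (hC : StrictMono C) :
    StrictMono (Fin.init C) := fun i j h =>
  hC (Fin.castSucc_lt_castSucc_iff.mpr h)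

lemma init_zero' {m : ℕ} (C : Fin (m + 2) → Finset (Fin k)) : Fin.init C 0 = C 0 := by
  simp [Fin.init]

lemma init_last_ne {m : ℕ} {C : Fin (m + 2) → Finset (Fin k)} (hC : StrictMono C)
    (hu : C (Fin.last (m + 1)) = Finset.univ) :
    Fin.init C (Fin.last m) ≠ Finset.univ := by
  have h := hC (Fin.castSucc_lt_last (Fin.last m))
  rw [hu] at h
  exact Finset.ssubset_univ_iff.mp (Finset.lt_iff_ssubset.mp h)

lemma snoc_init' {m : ℕ} {C : Fin (m + 2) → Finset (Fin k)}
    (hu : C (Fin.last (m + 1)) = Finset.univ) :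
    Fin.snoc (Fin.init C) Finset.univ = C := by
  rw [← hu]; exact Fin.snoc_init_self C

lemma Bzero {u : Finset (Fin k) → Fin k → F}
    (hne : ∀ T s, s ∈ T → u T s ≠ 0) (T : Finset (Fin k)) (hT : T ≠ Finset.univ) :
    ∑ σ ∈ (Finset.range (k + 1)).sigma
        (fun r => (Finset.univ : Finset (Fin (r + 1) → Finset (Fin k)))),
      fterm u T σ = 0 := by
  have key0 : ∀ C : Fin 1 → Finset (Fin k), StrictMono C ∧ C 0 = T →
      C (Fin.last 0) ≠ Finset.univ := by
    intro C hc hu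
    exact hT (hc.2.symm.trans hu)
  refine Finset.sum_involution (fun σ _ => gmap T σ) ?_ ?_ ?_ ?_
  · rintro ⟨r, C⟩ hσ
    beta_reduce
    by_cases hc : StrictMono C ∧ C 0 = T
    · by_cases hu : C (Fin.last r) = Finset.univ
      · cases r with
        | zero => exact absurd hu (key0 C hc)
        | succ m =>
            rw [gmap_pos_eq hc hu]
            have h2 := pair_cancel hne T m (Fin.init C) (init_strictMono hc.1)
              ((init_zero' C).trans hc.2) (init_last_ne hc.1 hu)
            rw [snoc_init' hu] at h2
            rw [add_comm]; exact h2
      · rw [gmap_pos_ne hc hu]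
        exact pair_cancel hne T r C hc.1 hc.2 hu
    · rw [gmap_neg hc]
      simp [fterm, hc]
  · rintro ⟨r, C⟩ hσ hf
    beta_reduce
    by_cases hc : StrictMono C ∧ C 0 = T
    · by_cases hu : C (Fin.last r) = Finset.univ
      · cases r with
        | zero => exact absurd hu (key0 C hc)
        | succ m =>
            rw [gmap_pos_eq hc hu]
            intro h
            have := congrArg Sigma.fst h
            simp at this
      · rw [gmap_pos_ne hc hu]
        intro h
        have := congrArg Sigma.fst h
        simp at this
    · exact absurd (by simp [fterm, hc]) hf
  · rintro ⟨r, C⟩ hσ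
    beta_reduce
    by_cases hc : StrictMono C ∧ C 0 = T
    · by_cases hu : C (Fin.last r) = Finset.univ
      · cases r with
        | zero => exact absurd hu (key0 C hc)
        | succ m =>
            rw [gmap_pos_eq hc hu]
            refine Finset.mem_sigma.mpr ⟨?_, Finset.mem_univ _⟩
            have := (Finset.mem_sigma.mp hσ).1
            simp only [Finset.mem_range] at this ⊢
            omega
      · rw [gmap_pos_ne hc hu]
        refine Finset.mem_sigma.mpr ⟨?_, Finset.mem_univ _⟩
        have h1 : r ≤ (C (Fin.last r)).card := card_bound hc.1
        have h2 : (C (Fin.last r)).card < k := by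
          have := Finset.card_lt_card (Finset.ssubset_univ_iff.mpr hu)
          simpa using this
        simp only [Finset.mem_range]
        omega
    · rw [gmap_neg hc]; exact hσ
  · rintro ⟨r, C⟩ hσ
    beta_reduce
    by_cases hc : StrictMono C ∧ C 0 = T
    · by_cases hu : C (Fin.last r) = Finset.univ
      · cases r with
        | zero => exact absurd hu (key0 C hc)
        | succ m =>
            rw [gmap_pos_eq hc hu,
              gmap_pos_ne ⟨init_strictMono hc.1, (init_zero' C).trans hc.2⟩
                (init_last_ne hc.1 hu)]
            exact congrArg (Sigma.mk (m + 1)) (snoc_init' hu)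
      · rw [gmap_pos_ne hc hu,
          gmap_pos_eq ⟨strictMono_snoc hc.1 hu, (snoc_zero' C Finset.univ).trans hc.2⟩
            (Fin.snoc_last _ _)]
        exact congrArg (Sigma.mk r) (Fin.init_snoc _ _)
    · rw [gmap_neg hc, gmap_neg hc]

lemma Bone {u : Finset (Fin k) → Fin k → F} :
    ∑ σ ∈ (Finset.range (k + 1)).sigma
        (fun r => (Finset.univ : Finset (Fin (r + 1) → Finset (Fin k)))),
      fterm u Finset.univ σ = pprod u Finset.univ Finset.univ := by
  rw [Finset.sum_sigma]
  rw [Finset.sum_eq_single_of_mem 0 (Finset.mem_range.mpr (Nat.succ_pos k)) ?h]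
  case h =>
    intro r _ hr0
    refine Finset.sum_eq_zero fun C _ => ?_
    simp only [fterm]
    rw [if_neg]
    rintro ⟨hSM, h0⟩
    obtain ⟨m, rfl⟩ := Nat.exists_eq_succ_of_ne_zero hr0
    have hlt : (0 : Fin (m + 2)) < Fin.last (m + 1) := Fin.last_pos'
    have h2 := hSM hlt
    rw [h0] at h2
    exact lt_irrefl _ (h2.trans_le (le_top.trans_eq Finset.top_eq_univ))
  have h1 : ∀ C : Fin 1 → Finset (Fin k), fterm u Finset.univ ⟨0, C⟩ =
      if C 0 = Finset.univ then pprod u Finset.univ Finset.univ else 0 := by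
    intro C
    simp only [fterm]
    by_cases h : C 0 = Finset.univ
    · rw [if_pos ⟨Subsingleton.strictMono C, h⟩, if_pos h]
      have : (Fin.last 0) = (0 : Fin 1) := rfl
      rw [this, h]
      simp
    · rw [if_neg, if_neg h]
      rintro ⟨_, h0⟩
      exact h h0
  rw [Finset.sum_congr rfl fun C _ => h1 C]
  rw [Fintype.sum_eq_single (fun _ => Finset.univ : Fin 1 → Finset (Fin k)) ?_]
  · simp
  · intro C hC
    rw [if_neg]
    intro h0
    exact hC (funext fun i => by rw [Subsingleton.elim i (0 : Fin 1), h0])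

lemma step1 {u : Finset (Fin k) → Fin k → F} (T : Finset (Fin k)) :
    ∑ S ∈ Finset.univ.powerset,
        (if T ⊆ S then pprod u Finset.univ S * Uchain u S T else 0) =
      (pprod u T T)⁻¹ *
        ∑ σ ∈ (Finset.range (k + 1)).sigma
          (fun r => (Finset.univ : Finset (Fin (r + 1) → Finset (Fin k)))),
          fterm u T σ := by
  have point : ∀ S ∈ Finset.univ.powerset,
      (if T ⊆ S then pprod u Finset.univ S * Uchain u S T else 0) =
      (pprod u T T)⁻¹ * ∑ r ∈ Finset.range (k + 1), ∑ C : Fin (r + 1) → Finset (Fin k),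
        (if StrictMono C ∧ C 0 = T ∧ C (Fin.last r) = S then
          pprod u Finset.univ (C (Fin.last r)) *
            ((-1 : F) ^ r * ∏ i : Fin r, (pprod u (C i.succ) (C i.succ \ C i.castSucc))⁻¹)
        else 0) := by
    intro S _
    by_cases hTS : T ⊆ S
    · rw [if_pos hTS]
      simp only [Uchain]
      rw [mul_left_comm]
      congr 1
      rw [Finset.mul_sum]
      refine Finset.sum_congr rfl fun r _ => ?_
      rw [Finset.mul_sum]
      refine Finset.sum_congr rfl fun C _ => ?_
      rw [mul_ite, mul_zero]
      split_ifs with h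
      · rw [h.2.2]
      · rfl
    · rw [if_neg hTS]
      symm
      rw [mul_eq_zero]
      right
      refine Finset.sum_eq_zero fun r _ => Finset.sum_eq_zero fun C _ => ?_
      rw [if_neg]
      rintro ⟨hSM, h0, hlast⟩
      exact hTS (h0 ▸ hlast ▸ hSM.monotone (Fin.zero_le _))
  rw [Finset.sum_congr rfl point, ← Finset.mul_sum]
  congr 1
  rw [Finset.sum_sigma, Finset.sum_comm]
  refine Finset.sum_congr rfl fun r _ => ?_
  rw [Finset.sum_comm]
  refine Finset.sum_congr rfl fun C _ => ?_
  rw [Finset.sum_eq_single_of_mem (C (Fin.last r))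
      (Finset.mem_powerset.mpr (Finset.subset_univ _)) ?_]
  · simp only [fterm]
    by_cases h : StrictMono C ∧ C 0 = T
    · rw [if_pos (show _ ∧ _ ∧ _ from ⟨h.1, h.2, trivial⟩), if_pos h]
    · rw [if_neg, if_neg h]
      rintro ⟨h1, h2, _⟩
      exact h ⟨h1, h2⟩
  · intro S _ hS
    rw [if_neg]
    rintro ⟨_, _, h3⟩
    exact hS h3.symm

end aux

/-- with `u_{T,s} = 0` for `s ∉ T` and `u_{T,s} ≠ 0` for `s ∈ T`, for any
`T ⊊ [k]` we have `∑_{T ⊆ S ⊆ [k]} p_{[k],S} U_{S,T} = 0`, while for `T = [k]` the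
corresponding sum equals `1`. -/
theorem stmt11 {F : Type*} [Field F] (k : ℕ) (hk : 1 ≤ k)
    (u : Finset (Fin k) → Fin k → F)
    (hzero : ∀ T s, s ∉ T → u T s = 0)
    (hne : ∀ T s, s ∈ T → u T s ≠ 0) :
    (∀ T : Finset (Fin k), T ⊂ Finset.univ →
        ∑ S ∈ Finset.univ.powerset,
          (if T ⊆ S then pprod u Finset.univ S * Uchain u S T else 0) = 0) ∧
      ∑ S ∈ (Finset.univ : Finset (Fin k)).powerset,
          (if (Finset.univ : Finset (Fin k)) ⊆ S then
            pprod u Finset.univ S * Uchain u S Finset.univ else 0) = 1 := by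
  have key : ∀ T : Finset (Fin k),
      ∑ S ∈ Finset.univ.powerset,
        (if T ⊆ S then pprod u Finset.univ S * Uchain u S T else 0) =
      if T = Finset.univ then 1 else 0 := by
    intro T
    rw [step1 T]
    by_cases hT : T = Finset.univ
    · subst hT
      rw [Bone, if_pos rfl, inv_mul_cancel₀ (pprod_ne_zero hne (Finset.subset_univ _))]
    · rw [Bzero hne T hT, mul_zero, if_neg hT]
  constructor
  · intro T hT
    rw [key T, if_neg (Finset.ssubset_univ_iff.mp hT)]
  · rw [key Finset.univ, if_pos rfl]
end

section
/- Let $L$ be a pointed full-dimensional cone in $\mathbb{R}^n$ subdivided into full-dimensional cones $L_1,\dots,L_t$ forming a fan, let $\lambda$ be a cone of the fan, and let $U = \mathrm{span}(\lambda)$. Then the images $\overline{L_i}$ in $\mathbb{R}^n/U$, for those $i$ with $\lambda$ a face of $L_i$, cover the image $\overline{L}$: that is, for every $w \in L$ there exists $i$ with $\lambda$ a face of $L_i$ and $\overline{w} \in \overline{L_i}$. -/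
open scoped RealInnerProductSpace

variable {E : Type*} [NormedAddCommGroup E] [InnerProductSpace ℝ E]

/-- A (finitely generated, i.e. polyhedral) cone. -/
def IsPolyhedralCone (C : Set E) : Prop :=
  ∃ (k : ℕ) (v : Fin k → E),
    C = {x | ∃ c : Fin k → ℝ, (∀ i, 0 ≤ c i) ∧ x = ∑ i, c i • v i}

/-- `F` is a face of the cone `C`: cut out of `C` by a supporting linear functional. -/
def IsFaceOf (F C : Set E) : Prop :=
  ∃ y : E, (∀ x ∈ C, 0 ≤ ⟪y, x⟫) ∧ F = {x ∈ C | ⟪y, x⟫ = 0}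

section helpers

private lemma sum_extend_dite' {M : Type*} [AddCommMonoid M] {k : ℕ} (S : Finset (Fin k))
    (e : Fin k → M) (h0 : ∀ j ∉ S, e j = 0) : ∑ j, e j = ∑ j : S, e (↑j) := by
  rw [Finset.sum_coe_sort]
  exact (Finset.sum_subset (Finset.subset_univ S) (fun x _ hx => h0 x hx)).symm

private lemma cone_caratheodory {F : Type*} [AddCommGroup F] [Module ℝ F]
    {k : ℕ} (v : Fin k → F) (c : Fin k → ℝ) (hc : ∀ j, 0 ≤ c j) :
    ∃ (S : Finset (Fin k)) (c' : Fin k → ℝ),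
      LinearIndependent ℝ (fun j : S => v j) ∧ (∀ j, 0 ≤ c' j) ∧
      (∀ j, j ∉ S → c' j = 0) ∧ ∑ j, c' j • v j = ∑ j, c j • v j := by
  classical
  suffices H : ∀ (N : ℕ) (c : Fin k → ℝ), (∀ j, 0 ≤ c j) →
      (Finset.univ.filter fun j => c j ≠ 0).card ≤ N →
      ∃ (S : Finset (Fin k)) (c' : Fin k → ℝ),
        LinearIndependent ℝ (fun j : S => v j) ∧ (∀ j, 0 ≤ c' j) ∧
        (∀ j, j ∉ S → c' j = 0) ∧ ∑ j, c' j • v j = ∑ j, c j • v j by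
    exact H _ c hc le_rfl
  intro N
  induction N with
  | zero =>
    intro c hc hcard
    have hz : ∀ j, c j = 0 := by
      intro j
      by_contra h
      have hj : j ∈ Finset.univ.filter fun j => c j ≠ 0 := by simp [h]
      have := Finset.card_pos.mpr ⟨j, hj⟩
      omega
    haveI : IsEmpty ((∅ : Finset (Fin k)) : Type) := Finset.isEmpty_coe_sort.2 rfl
    exact ⟨∅, c, linearIndependent_empty_type, hc, fun j _ => hz j, rfl⟩
  | succ N ih =>
    intro c hc hcard
    set S := Finset.univ.filter fun j => c j ≠ 0 with hS
    by_cases hli : LinearIndependent ℝ (fun j : S => v j)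
    · exact ⟨S, c, hli, hc, fun j hj => by simpa [hS] using hj, rfl⟩
    · obtain ⟨g, hg0, j₀, hj₀⟩ := Fintype.not_linearIndependent_iff.mp hli
      set d : Fin k → ℝ := fun j => if h : j ∈ S then g ⟨j, h⟩ else 0 with hd
      have hdsupp : ∀ j, d j ≠ 0 → c j ≠ 0 := by
        intro j hj
        by_contra h
        have : j ∉ S := by simp [hS, h]
        simp [hd, this] at hj
      have hdsum : ∑ j, d j • v j = 0 := by
        rw [sum_extend_dite' S (fun j => d j • v j)
          (fun j hj => by show d j • v j = 0; simp [hd, hj])]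
        rw [← hg0]
        exact Finset.sum_congr rfl fun j _ => by simp [hd, j.2]
      have key : ∀ d' : Fin k → ℝ, (∀ j, d' j ≠ 0 → c j ≠ 0) →
          (∑ j, d' j • v j = 0) → (∃ j, 0 < d' j) →
          ∃ (S : Finset (Fin k)) (c' : Fin k → ℝ),
            LinearIndependent ℝ (fun j : S => v j) ∧ (∀ j, 0 ≤ c' j) ∧
            (∀ j, j ∉ S → c' j = 0) ∧ ∑ j, c' j • v j = ∑ j, c j • v j := by
        intro d' hsupp hsum ⟨jp, hjp⟩
        set T := Finset.univ.filter fun j => 0 < d' j with hT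
        have hTne : T.Nonempty := ⟨jp, by simp [hT, hjp]⟩
        obtain ⟨jm, hjmT, hjmin⟩ := Finset.exists_min_image T (fun j => c j / d' j) hTne
        have hdjm : 0 < d' jm := by simpa [hT] using hjmT
        set r := c jm / d' jm with hr
        have hr0 : 0 ≤ r := div_nonneg (hc jm) hdjm.le
        set c'' : Fin k → ℝ := fun j => c j - r * d' j with hc''
        have hc''0 : ∀ j, 0 ≤ c'' j := by
          intro j
          by_cases h : 0 < d' j
          · have : r ≤ c j / d' j := hjmin j (by simp [hT, h])
            have := (le_div_iff₀ h).mp this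
            simp only [hc'']; linarith
          · push_neg at h
            have h1 : r * d' j ≤ 0 := mul_nonpos_of_nonneg_of_nonpos hr0 h
            have h2 := hc j
            simp only [hc'']; linarith
        have hc''sum : ∑ j, c'' j • v j = ∑ j, c j • v j := by
          have hz : ∑ j, (r * d' j) • v j = 0 := by
            have h := Finset.smul_sum (r := r) (s := Finset.univ) (f := fun j => d' j • v j)
            rw [hsum, smul_zero] at h
            calc ∑ j, (r * d' j) • v j = ∑ j, r • d' j • v j :=
                  Finset.sum_congr rfl fun j _ => (smul_smul r (d' j) (v j)).symm
              _ = 0 := h.symm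
          calc ∑ j, c'' j • v j = ∑ j, (c j • v j - (r * d' j) • v j) := by
                exact Finset.sum_congr rfl fun j _ => by rw [hc'', sub_smul]
            _ = ∑ j, c j • v j - ∑ j, (r * d' j) • v j := by rw [Finset.sum_sub_distrib]
            _ = ∑ j, c j • v j := by rw [hz, sub_zero]
        have hjmS : jm ∈ S := by simp [hS, hsupp jm hdjm.ne']
        have hsub : (Finset.univ.filter fun j => c'' j ≠ 0) ⊆ S.erase jm := by
          intro j hj
          simp only [Finset.mem_filter, Finset.mem_univ, true_and] at hj
          refine Finset.mem_erase.mpr ⟨?_, ?_⟩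
          · rintro rfl
            apply hj
            rw [hc'']
            show c j - r * d' j = 0
            rw [hr, div_mul_cancel₀ _ hdjm.ne', sub_self]
          · by_contra h
            have hcj : c j = 0 := by simpa [hS] using h
            have hdj : d' j = 0 := by
              by_contra h'
              exact h (by simp [hS, hsupp j h'])
            apply hj; simp [hc'', hcj, hdj]
        have hcard' : (Finset.univ.filter fun j => c'' j ≠ 0).card ≤ N := by
          have h1 := Finset.card_le_card hsub
          have h2 := Finset.card_erase_of_mem hjmS
          have h3 : 1 ≤ S.card := Finset.card_pos.mpr ⟨jm, hjmS⟩
          omega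
        obtain ⟨S', c', h1, h2, h3, h4⟩ := ih c'' hc''0 hcard'
        exact ⟨S', c', h1, h2, h3, h4.trans hc''sum⟩
      by_cases hpos : ∃ j, 0 < d j
      · exact key d hdsupp hdsum hpos
      · push_neg at hpos
        refine key (-d) (fun j hj => hdsupp j (by simpa using hj)) ?_ ?_
        · simp only [Pi.neg_apply, neg_smul]
          rw [Finset.sum_neg_distrib, hdsum, neg_zero]
        · have hne : d ↑j₀ ≠ 0 := by simp [hd, j₀.2, hj₀]
          exact ⟨j₀, by
            simp only [Pi.neg_apply]
            cases (hpos j₀).lt_or_eq with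
            | inl h => linarith
            | inr h => exact absurd h hne⟩

private lemma IsPolyhedralCone.isClosed' {F : Type*} [NormedAddCommGroup F]
    [InnerProductSpace ℝ F] [FiniteDimensional ℝ F]
    {C : Set F} (hC : IsPolyhedralCone C) : IsClosed C := by
  classical
  obtain ⟨k, v, rfl⟩ := hC
  have heq : {x : F | ∃ c : Fin k → ℝ, (∀ i, 0 ≤ c i) ∧ x = ∑ i, c i • v i}
      = ⋃ (S : Finset (Fin k)) (_ : LinearIndependent ℝ (fun j : S => v j)),
          (fun c : S → ℝ => ∑ j : S, c j • v (j : Fin k)) '' {c | ∀ j, 0 ≤ c j} := by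
    ext x
    simp only [Set.mem_setOf_eq, Set.mem_iUnion, Set.mem_image]
    constructor
    · rintro ⟨c, hc, rfl⟩
      obtain ⟨S, c', hli, hc', hsupp, hsum⟩ := cone_caratheodory v c hc
      refine ⟨S, hli, fun j => c' j, fun j => hc' j, ?_⟩
      rw [← hsum]
      exact (sum_extend_dite' S (fun j => c' j • v j)
        (fun j hj => by show c' j • v j = 0; rw [hsupp j hj, zero_smul])).symm
    · rintro ⟨S, hli, c, hc, rfl⟩
      refine ⟨fun j => if h : j ∈ S then c ⟨j, h⟩ else 0, fun j => ?_, ?_⟩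
      · by_cases h : j ∈ S
        · simpa [h] using hc ⟨j, h⟩
        · simp [h]
      · rw [sum_extend_dite' S _ (fun j hj => by simp [hj])]
        exact (Finset.sum_congr rfl fun j _ => by simp [j.2]).symm
  rw [heq]
  refine isClosed_iUnion_of_finite fun S => isClosed_iUnion_of_finite fun hli => ?_
  set f : (S → ℝ) →ₗ[ℝ] F :=
    { toFun := fun c => ∑ j : S, c j • v (j : Fin k),
      map_add' := by intro a b; simp [add_smul, Finset.sum_add_distrib],
      map_smul' := by
        intro m a
        simp only [Pi.smul_apply, smul_eq_mul, RingHom.id_apply, Finset.smul_sum, ← smul_smul] }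
    with hf
  have hker : LinearMap.ker f = ⊥ := by
    rw [LinearMap.ker_eq_bot']
    intro m hm
    have := Fintype.linearIndependent_iff.mp hli m hm
    funext j; exact this j
  have hemb := LinearMap.isClosedEmbedding_of_injective (f := f) hker
  have hcl : IsClosed {c : S → ℝ | ∀ j, 0 ≤ c j} := by
    have h2 : {c : S → ℝ | ∀ j, 0 ≤ c j} = ⋂ j, {c | 0 ≤ c j} := by
      ext; simp [Set.mem_iInter]
    rw [h2]
    exact isClosed_iInter fun j => isClosed_le continuous_const (continuous_apply j)
  exact hemb.isClosedMap _ hcl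

private lemma IsPolyhedralCone.add_mem' {C : Set E} (hC : IsPolyhedralCone C) {x y : E}
    (hx : x ∈ C) (hy : y ∈ C) : x + y ∈ C := by
  obtain ⟨k, v, rfl⟩ := hC
  obtain ⟨c, hc, rfl⟩ := hx
  obtain ⟨d, hd, rfl⟩ := hy
  exact ⟨c + d, fun j => add_nonneg (hc j) (hd j), by
    simp [add_smul, Finset.sum_add_distrib]⟩

private lemma IsPolyhedralCone.smul_mem' {C : Set E} (hC : IsPolyhedralCone C) {a : ℝ} {x : E}
    (ha : 0 ≤ a) (hx : x ∈ C) : a • x ∈ C := by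
  obtain ⟨k, v, rfl⟩ := hC
  obtain ⟨c, hc, rfl⟩ := hx
  exact ⟨fun j => a * c j, fun j => mul_nonneg ha (hc j), by
    simp [Finset.smul_sum, smul_smul]⟩

end helpers

/-- if a pointed full-dimensional cone `L` is subdivided by the
full-dimensional cones `L₁,…,L_t` of a fan and `λ` is a cone of the fan, with
`U = span λ`, then the images of those `Lᵢ` having `λ` as a face cover the image of `L`
in the quotient `E/U`: every `w ∈ L` has `w̄ ∈ L̄ᵢ` for some `i` with `λ` a face of `Lᵢ`. -/
theorem stmt15 (n t : ℕ)
    (L : Set (EuclideanSpace ℝ (Fin n))) (hL : IsPolyhedralCone L)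
    (hpointed : L ∩ (-L) ⊆ {0}) (hfull : Submodule.span ℝ L = ⊤)
    (Ls : Fin t → Set (EuclideanSpace ℝ (Fin n)))
    (hLs : ∀ i, IsPolyhedralCone (Ls i))
    (hLsfull : ∀ i, Submodule.span ℝ (Ls i) = ⊤)
    (hunion : (⋃ i, Ls i) = L)
    (hfan : ∀ i j, IsFaceOf (Ls i ∩ Ls j) (Ls i))
    (lam : Set (EuclideanSpace ℝ (Fin n))) (hlam : ∃ i₀, IsFaceOf lam (Ls i₀))
    (U : Submodule ℝ (EuclideanSpace ℝ (Fin n))) (hU : U = Submodule.span ℝ lam) :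
    ∀ w ∈ L, ∃ i, IsFaceOf lam (Ls i) ∧ U.mkQ w ∈ U.mkQ '' Ls i := by
    classical
  intro w hw
  obtain ⟨i₀, y₀, hy₀, hlam₀⟩ := hlam
  obtain ⟨k, v, hv⟩ := hLs i₀
  have hvi : ∀ j, v j ∈ Ls i₀ := by
    intro j
    rw [hv]
    refine ⟨fun l => if l = j then 1 else 0, fun l => by dsimp only; split <;> norm_num, ?_⟩
    simp [ite_smul]
  set cρ : Fin k → ℝ := fun j => if ⟪y₀, v j⟫ = 0 then 1 else 0 with hcρ
  set ρ := ∑ j, cρ j • v j with hρ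
  have hinner_sum : ∀ (y : EuclideanSpace ℝ (Fin n)) (c : Fin k → ℝ),
      ⟪y, ∑ j, c j • v j⟫ = ∑ j, c j * ⟪y, v j⟫ := by
    intro y c
    rw [inner_sum]
    exact Finset.sum_congr rfl fun j _ => real_inner_smul_right _ _ _
  have hcρnn : ∀ j, 0 ≤ cρ j := fun j => by rw [hcρ]; dsimp only; split <;> norm_num
  have hρmem : ρ ∈ Ls i₀ := by rw [hv]; exact ⟨cρ, hcρnn, rfl⟩
  have hρ0 : ⟪y₀, ρ⟫ = 0 := by
    rw [hρ, hinner_sum]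
    refine Finset.sum_eq_zero fun j _ => ?_
    by_cases h : ⟪y₀, v j⟫ = 0 <;> simp [hcρ, h]
  have hρlam : ρ ∈ lam := by rw [hlam₀]; exact ⟨hρmem, hρ0⟩
  have keyA : ∀ y₂ : EuclideanSpace ℝ (Fin n), (∀ x ∈ Ls i₀, 0 ≤ ⟪y₂, x⟫) → ⟪y₂, ρ⟫ = 0 →
      ∀ x ∈ lam, ⟪y₂, x⟫ = 0 := by
    intro y₂ hy₂ hy₂ρ x hx
    rw [hlam₀] at hx
    obtain ⟨hxmem, hx0⟩ := hx
    rw [hv] at hxmem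
    obtain ⟨c, hc, rfl⟩ := hxmem
    have hterm0 : ∀ j, c j * ⟪y₀, v j⟫ = 0 := by
      rw [hinner_sum] at hx0
      have h := (Finset.sum_eq_zero_iff_of_nonneg
        (fun j _ => mul_nonneg (hc j) (hy₀ _ (hvi j)))).mp hx0
      exact fun j => h j (Finset.mem_univ j)
    have hSzero : ∀ j, ⟪y₀, v j⟫ = 0 → ⟪y₂, v j⟫ = 0 := by
      have h2 : ∑ j, cρ j * ⟪y₂, v j⟫ = 0 := by rw [← hinner_sum, ← hρ, hy₂ρ]
      have h := (Finset.sum_eq_zero_iff_of_nonneg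
        (fun j _ => mul_nonneg (hcρnn j) (hy₂ _ (hvi j)))).mp h2
      intro j hj
      have h3 := h j (Finset.mem_univ j)
      rw [hcρ] at h3
      simpa [hj] using h3
    rw [hinner_sum]
    refine Finset.sum_eq_zero fun j _ => ?_
    by_cases h : ⟪y₀, v j⟫ = 0
    · rw [hSzero j h, mul_zero]
    · rcases mul_eq_zero.mp (hterm0 j) with h' | h'
      · rw [h', zero_mul]
      · exact absurd h' h
  have hρL : ρ ∈ L := by rw [← hunion]; exact Set.mem_iUnion.mpr ⟨i₀, hρmem⟩
  have hp : ∀ s : ℕ, w + (s : ℝ) • ρ ∈ L := fun s =>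
    hL.add_mem' hw (hL.smul_mem' (Nat.cast_nonneg s) hρL)
  have hchoice : ∀ s : ℕ, ∃ i, w + (s : ℝ) • ρ ∈ Ls i := by
    intro s
    have h := hp s
    rw [← hunion] at h
    exact Set.mem_iUnion.mp h
  choose f hf using hchoice
  obtain ⟨i, hi⟩ := Finite.exists_infinite_fiber f
  have hinf : (f ⁻¹' {i}).Infinite := Set.infinite_coe_iff.mp hi
  have hfib : ∀ N : ℕ, ∃ s, N < s ∧ f s = i := by
    intro N
    obtain ⟨s, hs1, hs2⟩ := hinf.exists_gt N
    exact ⟨s, hs2, hs1⟩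
  have hρi : ρ ∈ Ls i := by
    have hclosed := (hLs i).isClosed'
    rw [← hclosed.closure_eq, Metric.mem_closure_iff]
    intro ε hε
    obtain ⟨s, hsN, hfs⟩ := hfib (Nat.ceil (‖w‖ / ε))
    have hs0 : 0 < (s : ℝ) := by
      have : 0 < s := lt_of_le_of_lt (Nat.zero_le _) hsN
      exact_mod_cast this
    refine ⟨(s : ℝ)⁻¹ • (w + (s : ℝ) • ρ),
      (hLs i).smul_mem' (inv_nonneg.mpr hs0.le) (by have := hf s; rwa [hfs] at this), ?_⟩
    have hexp : (s : ℝ)⁻¹ • (w + (s : ℝ) • ρ) = (s : ℝ)⁻¹ • w + ρ := by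
      rw [smul_add, smul_smul, inv_mul_cancel₀ hs0.ne', one_smul]
    rw [hexp, dist_eq_norm]
    have hdiff : ρ - ((s : ℝ)⁻¹ • w + ρ) = -((s : ℝ)⁻¹ • w) := by abel
    rw [hdiff, norm_neg, norm_smul, Real.norm_of_nonneg (inv_nonneg.mpr hs0.le)]
    have h1 : ‖w‖ / ε < (s : ℝ) := lt_of_le_of_lt (Nat.le_ceil _) (by exact_mod_cast hsN)
    have h2 : ‖w‖ < (s : ℝ) * ε := by
      have := mul_lt_mul_of_pos_right h1 hε
      rwa [div_mul_cancel₀ _ hε.ne'] at this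
    have h3 := mul_lt_mul_of_pos_left h2 (inv_pos.mpr hs0)
    rwa [← mul_assoc, inv_mul_cancel₀ hs0.ne', one_mul] at h3
  obtain ⟨y₂, hy₂pos, hy₂eq⟩ := hfan i₀ i
  have hρ2 : ⟪y₂, ρ⟫ = 0 := by
    have h : ρ ∈ Ls i₀ ∩ Ls i := ⟨hρmem, hρi⟩
    rw [hy₂eq] at h
    exact h.2
  have hlamsub : ∀ x ∈ lam, x ∈ Ls i₀ ∩ Ls i := by
    intro x hx
    rw [hy₂eq]
    exact ⟨by rw [hlam₀] at hx; exact hx.1, keyA y₂ hy₂pos hρ2 x hx⟩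
  obtain ⟨y₁, hy₁pos, hy₁eq⟩ := hfan i i₀
  obtain ⟨k', u, hu⟩ := hLs i
  have hui : ∀ j, u j ∈ Ls i := by
    intro j
    rw [hu]
    refine ⟨fun l => if l = j then 1 else 0, fun l => by dsimp only; split <;> norm_num, ?_⟩
    simp [ite_smul]
  have hinner_sum' : ∀ (y : EuclideanSpace ℝ (Fin n)) (c : Fin k' → ℝ),
      ⟪y, ∑ j, c j • u j⟫ = ∑ j, c j * ⟪y, u j⟫ := by
    intro y c
    rw [inner_sum]
    exact Finset.sum_congr rfl fun j _ => real_inner_smul_right _ _ _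
  have hA : ∀ j, 0 ≤ ⟪y₁, u j⟫ := fun j => hy₁pos _ (hui j)
  have hAB : ∀ j, ⟪y₁, u j⟫ = 0 → 0 ≤ ⟪y₀, u j⟫ := by
    intro j hj
    have h : u j ∈ Ls i ∩ Ls i₀ := by rw [hy₁eq]; exact ⟨hui j, hj⟩
    exact hy₀ _ h.2
  have hεex : ∃ ε : ℝ, 0 < ε ∧ ∀ j, 0 < ⟪y₁, u j⟫ + ε * ⟪y₀, u j⟫ ∨
      (⟪y₁, u j⟫ = 0 ∧ ⟪y₀, u j⟫ = 0) := by
    set bad := Finset.univ.filter fun j : Fin k' => ⟪y₀, u j⟫ < 0 with hbaddef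
    have hApos : ∀ j ∈ bad, 0 < ⟪y₁, u j⟫ := by
      intro j hj
      rw [hbaddef, Finset.mem_filter] at hj
      rcases (hA j).lt_or_eq with h | h
      · exact h
      · exact absurd (hAB j h.symm) (not_le.mpr hj.2)
    by_cases hbad : bad.Nonempty
    · set m := bad.inf' hbad fun j => ⟪y₁, u j⟫ / (-⟪y₀, u j⟫) with hm
      have hm0 : 0 < m := by
        rw [hm, Finset.lt_inf'_iff]
        intro j hj
        have h2 : 0 < -⟪y₀, u j⟫ := by
          rw [hbaddef, Finset.mem_filter] at hj
          linarith [hj.2]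
        exact div_pos (hApos j hj) h2
      refine ⟨m / 2, by linarith, fun j => ?_⟩
      by_cases hjb : j ∈ bad
      · left
        have hle : m ≤ ⟪y₁, u j⟫ / (-⟪y₀, u j⟫) := Finset.inf'_le _ hjb
        have h2 : 0 < -⟪y₀, u j⟫ := by
          rw [hbaddef, Finset.mem_filter] at hjb
          linarith [hjb.2]
        have h3 : (m / 2) * (-⟪y₀, u j⟫) < ⟪y₁, u j⟫ := by
          have hlt : m / 2 < ⟪y₁, u j⟫ / (-⟪y₀, u j⟫) := by linarith
          calc (m / 2) * (-⟪y₀, u j⟫)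
              < (⟪y₁, u j⟫ / (-⟪y₀, u j⟫)) * (-⟪y₀, u j⟫) :=
                mul_lt_mul_of_pos_right hlt h2
            _ = ⟪y₁, u j⟫ := div_mul_cancel₀ _ h2.ne'
        nlinarith [h3]
      · have hB : 0 ≤ ⟪y₀, u j⟫ := by
          rw [hbaddef, Finset.mem_filter] at hjb
          push_neg at hjb
          simpa using hjb (Finset.mem_univ j)
        rcases (hA j).lt_or_eq with h | h
        · left; nlinarith [mul_nonneg (by linarith : (0:ℝ) ≤ m / 2) hB]
        · rcases hB.lt_or_eq with h' | h'
          · left; nlinarith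
          · right; exact ⟨h.symm, h'.symm⟩
    · refine ⟨1, one_pos, fun j => ?_⟩
      have hB : 0 ≤ ⟪y₀, u j⟫ := by
        by_contra h
        push_neg at h
        exact hbad ⟨j, by rw [hbaddef, Finset.mem_filter]; exact ⟨Finset.mem_univ j, h⟩⟩
      rcases (hA j).lt_or_eq with h | h
      · left; nlinarith
      · rcases hB.lt_or_eq with h' | h'
        · left; nlinarith
        · right; exact ⟨h.symm, h'.symm⟩
  obtain ⟨ε, hε0, hεj⟩ := hεex
  set y := y₁ + ε • y₀ with hy
  have hyx : ∀ x : EuclideanSpace ℝ (Fin n), ⟪y, x⟫ = ⟪y₁, x⟫ + ε * ⟪y₀, x⟫ := by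
    intro x
    rw [hy, inner_add_left, real_inner_smul_left]
  have hynn : ∀ j, 0 ≤ ⟪y, u j⟫ := by
    intro j
    rw [hyx]
    rcases hεj j with h | ⟨h1, h2⟩
    · exact h.le
    · simp [h1, h2]
  have hface : IsFaceOf lam (Ls i) := by
    refine ⟨y, ?_, ?_⟩
    · intro x hx
      rw [hu] at hx
      obtain ⟨c, hc, rfl⟩ := hx
      rw [hinner_sum']
      exact Finset.sum_nonneg fun j _ => mul_nonneg (hc j) (hynn j)
    · ext x
      simp only [Set.mem_setOf_eq]
      constructor
      · intro hx
        have hxi : x ∈ Ls i := (hlamsub x hx).2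
        refine ⟨hxi, ?_⟩
        have h1 : ⟪y₁, x⟫ = 0 := by
          have h : x ∈ Ls i ∩ Ls i₀ := ⟨hxi, (hlamsub x hx).1⟩
          rw [hy₁eq] at h
          exact h.2
        have h0 : ⟪y₀, x⟫ = 0 := by rw [hlam₀] at hx; exact hx.2
        rw [hyx, h1, h0]; ring
      · rintro ⟨hxi, hx0⟩
        have hxmem := hxi
        rw [hu] at hxmem
        obtain ⟨c, hc, hxeq⟩ := hxmem
        have hterms : ∀ j, c j * ⟪y, u j⟫ = 0 := by
          have hsum0 : ∑ j, c j * ⟪y, u j⟫ = 0 := by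
            rw [← hinner_sum', ← hxeq]
            exact hx0
          have h := (Finset.sum_eq_zero_iff_of_nonneg
            (fun j _ => mul_nonneg (hc j) (hynn j))).mp hsum0
          exact fun j => h j (Finset.mem_univ j)
        have hcj : ∀ j, c j = 0 ∨ (⟪y₁, u j⟫ = 0 ∧ ⟪y₀, u j⟫ = 0) := by
          intro j
          rcases hεj j with h | h
          · left
            rcases mul_eq_zero.mp (hterms j) with h' | h'
            · exact h'
            · rw [hyx] at h'
              exact absurd h' (ne_of_gt h)
          · right; exact h
        have h1 : ⟪y₁, x⟫ = 0 := by
          rw [hxeq, hinner_sum']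
          refine Finset.sum_eq_zero fun j _ => ?_
          rcases hcj j with h | h
          · rw [h, zero_mul]
          · rw [h.1, mul_zero]
        have h0 : ⟪y₀, x⟫ = 0 := by
          rw [hxeq, hinner_sum']
          refine Finset.sum_eq_zero fun j _ => ?_
          rcases hcj j with h | h
          · rw [h, zero_mul]
          · rw [h.2, mul_zero]
        have hxi₀ : x ∈ Ls i₀ := by
          have h : x ∈ Ls i ∩ Ls i₀ := by rw [hy₁eq]; exact ⟨hxi, h1⟩
          exact h.2
        rw [hlam₀]
        exact ⟨hxi₀, h0⟩
  obtain ⟨s₀, _, hfs₀⟩ := hfib 0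
  have hx₀ : w + (s₀ : ℝ) • ρ ∈ Ls i := by
    have := hf s₀
    rwa [hfs₀] at this
  have hρU : ρ ∈ U := by rw [hU]; exact Submodule.subset_span hρlam
  refine ⟨i, hface, ⟨w + (s₀ : ℝ) • ρ, hx₀, ?_⟩⟩
  rw [map_add, map_smul]
  have hz : U.mkQ ρ = 0 := by
    rw [Submodule.mkQ_apply]
    exact (Submodule.Quotient.mk_eq_zero U).mpr hρU
  rw [hz, smul_zero, add_zero]
end
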